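/- arXiv:2207.03425 — 2 statements merged into one kernel-verified Lean document; each statement's English description precedes it below -/
import Mathlib

section
/- Let x be a real number with 1/2 < x < 1 and define p* : {k ∈ ℕ : k ≥ 5} → ℝ by p*(k) = (1 − x)²·x^{k−5}. Then p* is nonnegative, Σ_{k≥5} p*(k) = 1 − x, Σ_{k≥5} k·p*(k) = 5 − 4x, and p* maximizes the entropy under these constraints: for every function p : {k ∈ ℕ : k ≥ 5} → ℝ with p(k) ≥ 0 for all k, Σ_{k≥5} p(k) = 1 − x and Σ_{k≥5} k·p(k) = 5 − 4x (both series convergent, and Σ_{k≥5} p(k)·ln p(k) convergent), one has −Σ_{k≥5} p(k)·ln p(k) ≤ −Σ_{k≥5} p*(k)·ln p*(k), with the convention 0·ln 0 = 0. Moreover, when x = φ⁻¹ = (√5 − 1)/2, the maximizer satisfies p*(k) = φ^{1−k} for all k ≥ 5. -/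
/-- for real x with 1/2 < x < 1, the distribution
p*(k) = (1−x)²·x^{k−5} on {k ≥ 5} is nonnegative, sums to 1 − x, has mean degree sum
5 − 4x, and maximizes the entropy −Σ_{k≥5} p(k)·ln p(k) among all nonnegative p with
the same two constraints (convention 0·ln 0 = 0, automatic since Real.log 0 = 0).
Moreover when x = φ⁻¹ = (√5 − 1)/2 the maximizer is p*(k) = φ^{1−k}, with
φ = (1+√5)/2 the golden ratio. -/
theorem statement18 (x : ℝ) (hx1 : 1 / 2 < x) (hx2 : x < 1) :
    (∀ k : ℕ, 5 ≤ k → 0 ≤ (1 - x) ^ 2 * x ^ (k - 5)) ∧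
    (∑' i : ℕ, (1 - x) ^ 2 * x ^ ((i + 5) - 5)) = 1 - x ∧
    (∑' i : ℕ, ((i + 5 : ℕ) : ℝ) * ((1 - x) ^ 2 * x ^ ((i + 5) - 5))) = 5 - 4 * x ∧
    (∀ p : ℕ → ℝ, (∀ k : ℕ, 5 ≤ k → 0 ≤ p k) →
      Summable (fun i : ℕ => p (i + 5)) →
      Summable (fun i : ℕ => ((i + 5 : ℕ) : ℝ) * p (i + 5)) →
      Summable (fun i : ℕ => p (i + 5) * Real.log (p (i + 5))) →
      (∑' i : ℕ, p (i + 5)) = 1 - x →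
      (∑' i : ℕ, ((i + 5 : ℕ) : ℝ) * p (i + 5)) = 5 - 4 * x →
      -(∑' i : ℕ, p (i + 5) * Real.log (p (i + 5)))
        ≤ -(∑' i : ℕ, ((1 - x) ^ 2 * x ^ ((i + 5) - 5))
              * Real.log ((1 - x) ^ 2 * x ^ ((i + 5) - 5)))) ∧
    (x = (Real.sqrt 5 - 1) / 2 → ∀ k : ℕ, 5 ≤ k →
      (1 - x) ^ 2 * x ^ (k - 5) = ((1 + Real.sqrt 5) / 2) ^ (1 - (k : ℤ))) := by
  have hx0 : (0:ℝ) < x := by linarith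
  have hx0' : (0:ℝ) ≤ x := hx0.le
  have h1x : (0:ℝ) < 1 - x := by linarith
  have hnorm : ‖x‖ < 1 := by rw [Real.norm_eq_abs, abs_of_nonneg hx0']; exact hx2
  have hgs : Summable (fun i : ℕ => x ^ i) := summable_geometric_of_lt_one hx0' hx2
  have hgsum : (∑' i : ℕ, x ^ i) = (1 - x)⁻¹ := tsum_geometric_of_lt_one hx0' hx2
  have hns : Summable (fun i : ℕ => (i:ℝ) * x ^ i) := by
    have := summable_pow_mul_geometric_of_norm_lt_one (R := ℝ) 1 hnorm
    simpa using this
  have hnsum : (∑' i : ℕ, (i:ℝ) * x ^ i) = x / (1 - x) ^ 2 :=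
    tsum_coe_mul_geometric_of_norm_lt_one hnorm
  -- q facts
  set q : ℕ → ℝ := fun i => (1 - x) ^ 2 * x ^ i with hq
  have hq_pos : ∀ i, 0 < q i := fun i => by positivity
  have hq_s : Summable q := hgs.mul_left _
  have hq_tsum : (∑' i, q i) = 1 - x := by
    rw [hq, tsum_mul_left, hgsum]; field_simp
  have hiq_s : Summable (fun i : ℕ => (i:ℝ) * q i) := by
    have : (fun i : ℕ => (i:ℝ) * q i) = fun i : ℕ => (1 - x) ^ 2 * ((i:ℝ) * x ^ i) := by
      funext i; simp [hq]; ring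
    rw [this]; exact hns.mul_left _
  have hiq_tsum : (∑' i : ℕ, (i:ℝ) * q i) = x := by
    have hcg : (fun i : ℕ => (i:ℝ) * q i) = fun i : ℕ => (1 - x) ^ 2 * ((i:ℝ) * x ^ i) := by
      funext i; simp [hq]; ring
    rw [hcg, tsum_mul_left, hnsum]; field_simp
  set L := Real.log (1 - x) with hL
  set M := Real.log x with hM
  have hlogq : ∀ i : ℕ, Real.log (q i) = 2 * L + (i:ℝ) * M := by
    intro i
    rw [hq]
    rw [Real.log_mul (by positivity) (by positivity), Real.log_pow, Real.log_pow]
    push_cast; ring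
  have hqlog_s : Summable (fun i => q i * Real.log (q i)) := by
    have : (fun i => q i * Real.log (q i))
        = fun i => 2 * L * q i + M * ((i:ℝ) * q i) := by
      funext i; rw [hlogq i]; ring
    rw [this]; exact (hq_s.mul_left _).add (hiq_s.mul_left _)
  have hqlog_tsum : (∑' i, q i * Real.log (q i)) = 2 * L * (1 - x) + M * x := by
    have : (fun i => q i * Real.log (q i))
        = fun i => 2 * L * q i + M * ((i:ℝ) * q i) := by
      funext i; rw [hlogq i]; ring
    rw [this, Summable.tsum_add (hq_s.mul_left _) (hiq_s.mul_left _),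
      hq_s.tsum_mul_left (2 * L), hiq_s.tsum_mul_left M, hq_tsum, hiq_tsum]
  refine ⟨fun k _ => by positivity, ?_, ?_, ?_, ?_⟩
  · simpa only [Nat.add_sub_cancel] using hq_tsum
  · simp only [Nat.add_sub_cancel]
    have : (fun i : ℕ => ((i + 5 : ℕ) : ℝ) * ((1 - x) ^ 2 * x ^ i))
        = fun i : ℕ => (1 - x) ^ 2 * ((i:ℝ) * x ^ i) + (5 * (1 - x) ^ 2) * x ^ i := by
      funext i; push_cast; ring
    rw [this, Summable.tsum_add (hns.mul_left _) (hgs.mul_left _), tsum_mul_left, tsum_mul_left,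
      hnsum, hgsum]
    field_simp; ring
  · intro p hp hP_s hiP5_s hPlog_s hP_tsum hiP5_tsum
    simp only [Nat.add_sub_cancel]
    set P : ℕ → ℝ := fun i => p (i + 5) with hPdef
    have hPnn : ∀ i, 0 ≤ P i := fun i => hp _ (by omega)
    have hiP_s : Summable (fun i : ℕ => (i:ℝ) * P i) := by
      have : (fun i : ℕ => (i:ℝ) * P i)
          = fun i => ((i + 5 : ℕ) : ℝ) * P i - 5 * P i := by
        funext i; push_cast; ring
      rw [this]; exact hiP5_s.sub (hP_s.mul_left _)
    have hiP_tsum : (∑' i : ℕ, (i:ℝ) * P i) = x := by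
      have : (fun i : ℕ => (i:ℝ) * P i)
          = fun i => ((i + 5 : ℕ) : ℝ) * P i - 5 * P i := by
        funext i; push_cast; ring
      rw [this, Summable.tsum_sub hiP5_s (hP_s.mul_left _), hP_s.tsum_mul_left 5, hP_tsum, hiP5_tsum]
      ring
    have hPlogq_s : Summable (fun i => P i * Real.log (q i)) := by
      have : (fun i => P i * Real.log (q i))
          = fun i => 2 * L * P i + M * ((i:ℝ) * P i) := by
        funext i; rw [hlogq i]; ring
      rw [this]; exact (hP_s.mul_left _).add (hiP_s.mul_left _)
    have hPlogq_tsum : (∑' i, P i * Real.log (q i)) = 2 * L * (1 - x) + M * x := by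
      have : (fun i => P i * Real.log (q i))
          = fun i => 2 * L * P i + M * ((i:ℝ) * P i) := by
        funext i; rw [hlogq i]; ring
      rw [this, Summable.tsum_add (hP_s.mul_left _) (hiP_s.mul_left _),
        hP_s.tsum_mul_left (2 * L), hiP_s.tsum_mul_left M, hP_tsum, hiP_tsum]
    have key : ∀ i, P i * Real.log (q i) - P i * Real.log (P i) ≤ q i - P i := by
      intro i
      rcases eq_or_lt_of_le (hPnn i) with h0 | hPi
      · rw [← h0]; simp; exact (hq_pos i).le
      · have hlog : Real.log (q i / P i) ≤ q i / P i - 1 :=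
          Real.log_le_sub_one_of_pos (by positivity)
        rw [Real.log_div (hq_pos i).ne' hPi.ne'] at hlog
        have := mul_le_mul_of_nonneg_left hlog (hPnn i)
        calc P i * Real.log (q i) - P i * Real.log (P i)
            = P i * (Real.log (q i) - Real.log (P i)) := by ring
          _ ≤ P i * (q i / P i - 1) := mul_le_mul_of_nonneg_left hlog (hPnn i)
          _ = q i - P i := by field_simp
    have hsum_le : (∑' i, (P i * Real.log (q i) - P i * Real.log (P i)))
        ≤ ∑' i, (q i - P i) :=
      Summable.tsum_le_tsum key (hPlogq_s.sub hPlog_s) (hq_s.sub hP_s)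
    rw [Summable.tsum_sub hPlogq_s hPlog_s, Summable.tsum_sub hq_s hP_s, hq_tsum, hP_tsum,
      hPlogq_tsum, hqlog_tsum.symm] at hsum_le
    have : (∑' i, q i * Real.log (q i)) ≤ ∑' i, P i * Real.log (P i) := by linarith
    simpa [hPdef] using neg_le_neg this
  · intro hx k hk
    set φ : ℝ := (1 + Real.sqrt 5) / 2 with hφ
    have h5 : Real.sqrt 5 ^ 2 = 5 := Real.sq_sqrt (by norm_num)
    have hs5 : (0:ℝ) < Real.sqrt 5 := Real.sqrt_pos.mpr (by norm_num)
    have hφpos : 0 < φ := by rw [hφ]; positivity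
    have hxφ : x * φ = 1 := by rw [hx, hφ]; nlinarith [h5]
    have hxinv : x = φ⁻¹ := eq_inv_of_mul_eq_one_left hxφ
    have h1x' : 1 - x = (φ⁻¹) ^ 2 := by
      have hφ2 : φ ^ 2 = φ + 1 := by rw [hφ]; nlinarith [h5]
      have hmul : φ ^ 2 * (1 - x) = φ ^ 2 * (φ⁻¹) ^ 2 := by
        rw [hxinv]
        field_simp
        nlinarith [hφ2]
      exact mul_left_cancel₀ (by positivity) hmul
    have hk1 : (1 : ℤ) - (k : ℤ) = -((k - 1 : ℕ) : ℤ) := by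
      push_cast [Nat.cast_sub (by omega : 1 ≤ k)]; ring
    rw [h1x', hxinv, hk1, zpow_neg, zpow_natCast, ← inv_pow, ← pow_mul, ← pow_add]
    congr 1
    omega
end

section
/- Let n ≥ 2 be an integer and let x be a real number with 0 < x < 1/n. Set r = (1 − (n−1)x)/(1 − (n−2)x) ∈ (0,1) and define p* : {k ∈ ℕ : k ≥ n+3} → ℝ by p*(k) = (x²/(1 − (n−1)x))·r^{k−(n+2)}. Then p* is nonnegative, Σ_{k≥n+3} p*(k) = x, Σ_{k≥n+3} k·p*(k) = 1 + 4x, and p* maximizes the entropy under these constraints: for every function p : {k ∈ ℕ : k ≥ n+3} → ℝ with p(k) ≥ 0 for all k, Σ_{k≥n+3} p(k) = x and Σ_{k≥n+3} k·p(k) = 1 + 4x (both series convergent, and Σ_{k≥n+3} p(k)·ln p(k) convergent), one has −Σ_{k≥n+3} p(k)·ln p(k) ≤ −Σ_{k≥n+3} p*(k)·ln p*(k), with the convention 0·ln 0 = 0. Moreover, when x = 1/(n + φ⁻¹), the maximizer satisfies p*(k) = x·(φ⁻¹)^{k−(n+1)} for all k ≥ n+3. -/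
set_option maxHeartbeats 1000000

/-- for an integer n ≥ 2 and real x with 0 < x < 1/n, set
r = (1 − (n−1)x)/(1 − (n−2)x) ∈ (0,1). The distribution
p*(k) = (x²/(1 − (n−1)x))·r^{k−(n+2)} on {k ≥ n+3} is nonnegative, sums to x, has mean
degree sum 1 + 4x, and maximizes the entropy −Σ_{k≥n+3} p(k)·ln p(k) among all
nonnegative p with the same two constraints (convention 0·ln 0 = 0, automatic since
Real.log 0 = 0). Moreover when x = 1/(n + φ⁻¹), with φ⁻¹ = (√5 − 1)/2 the reciprocal of
the golden ratio, the maximizer is p*(k) = x·(φ⁻¹)^{k−(n+1)}. -/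
theorem statement19 (n : ℕ) (hn : 2 ≤ n) (x : ℝ) (hx0 : 0 < x) (hx1 : x < 1 / (n : ℝ)) :
    0 < (1 - ((n : ℝ) - 1) * x) / (1 - ((n : ℝ) - 2) * x) ∧
    (1 - ((n : ℝ) - 1) * x) / (1 - ((n : ℝ) - 2) * x) < 1 ∧
    (∀ k : ℕ, n + 3 ≤ k →
      0 ≤ x ^ 2 / (1 - ((n : ℝ) - 1) * x)
            * ((1 - ((n : ℝ) - 1) * x) / (1 - ((n : ℝ) - 2) * x)) ^ (k - (n + 2))) ∧
    (∑' i : ℕ, x ^ 2 / (1 - ((n : ℝ) - 1) * x)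
        * ((1 - ((n : ℝ) - 1) * x) / (1 - ((n : ℝ) - 2) * x)) ^ (i + 1)) = x ∧
    (∑' i : ℕ, ((i + (n + 3) : ℕ) : ℝ) * (x ^ 2 / (1 - ((n : ℝ) - 1) * x)
        * ((1 - ((n : ℝ) - 1) * x) / (1 - ((n : ℝ) - 2) * x)) ^ (i + 1))) = 1 + 4 * x ∧
    (∀ p : ℕ → ℝ, (∀ k : ℕ, n + 3 ≤ k → 0 ≤ p k) →
      Summable (fun i : ℕ => p (i + (n + 3))) →
      Summable (fun i : ℕ => ((i + (n + 3) : ℕ) : ℝ) * p (i + (n + 3))) →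
      Summable (fun i : ℕ => p (i + (n + 3)) * Real.log (p (i + (n + 3)))) →
      (∑' i : ℕ, p (i + (n + 3))) = x →
      (∑' i : ℕ, ((i + (n + 3) : ℕ) : ℝ) * p (i + (n + 3))) = 1 + 4 * x →
      -(∑' i : ℕ, p (i + (n + 3)) * Real.log (p (i + (n + 3))))
        ≤ -(∑' i : ℕ,
            (x ^ 2 / (1 - ((n : ℝ) - 1) * x)
              * ((1 - ((n : ℝ) - 1) * x) / (1 - ((n : ℝ) - 2) * x)) ^ (i + 1))
            * Real.log (x ^ 2 / (1 - ((n : ℝ) - 1) * x)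
              * ((1 - ((n : ℝ) - 1) * x) / (1 - ((n : ℝ) - 2) * x)) ^ (i + 1)))) ∧
    (x = 1 / ((n : ℝ) + (Real.sqrt 5 - 1) / 2) → ∀ k : ℕ, n + 3 ≤ k →
      x ^ 2 / (1 - ((n : ℝ) - 1) * x)
          * ((1 - ((n : ℝ) - 1) * x) / (1 - ((n : ℝ) - 2) * x)) ^ (k - (n + 2))
        = x * ((Real.sqrt 5 - 1) / 2) ^ (k - (n + 1))) := by
  have hn2 : (2 : ℝ) ≤ (n : ℝ) := by exact_mod_cast hn
  have hnpos : (0 : ℝ) < (n : ℝ) := by linarith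
  have hxn : x * (n : ℝ) < 1 := (lt_div_iff₀ hnpos).mp hx1
  set a := 1 - ((n : ℝ) - 1) * x with ha
  set b := 1 - ((n : ℝ) - 2) * x with hb
  have hax : x < a := by rw [ha]; nlinarith
  have ha0 : (0 : ℝ) < a := lt_trans hx0 hax
  have hba : b = a + x := by rw [ha, hb]; ring
  have hb0 : (0 : ℝ) < b := by rw [hba]; linarith
  have hab : a < b := by rw [hba]; linarith
  set r := a / b with hrdef
  have hr0 : 0 < r := div_pos ha0 hb0
  have hr1 : r < 1 := (div_lt_one hb0).mpr hab
  have h1r : 1 - r = x / b := by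
    rw [hrdef, eq_div_iff hb0.ne', sub_mul, one_mul, div_mul_cancel₀ _ hb0.ne']
    rw [hba]; ring
  set c := x ^ 2 / a with hcdef
  have hc0 : 0 < c := div_pos (pow_pos hx0 2) ha0
  have hrabs : ‖r‖ < 1 := by rw [Real.norm_eq_abs, abs_lt]; constructor <;> linarith
  -- summability facts
  have hSgeo : Summable (fun i : ℕ => r ^ i) := summable_geometric_of_lt_one hr0.le hr1
  have hSig : Summable (fun i : ℕ => (i : ℝ) * r ^ i) := by
    have := (hasSum_coe_mul_geometric_of_norm_lt_one (r := r) hrabs).summable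
    exact this
  have hSq : Summable (fun i : ℕ => c * r ^ (i + 1)) := by
    refine (hSgeo.mul_left (c * r)).congr fun i => ?_
    rw [pow_succ]; ring
  have hSkq : Summable (fun i : ℕ => ((i + (n + 3) : ℕ) : ℝ) * (c * r ^ (i + 1))) := by
    refine ((hSig.mul_left (c * r)).add (hSgeo.mul_left (((n : ℝ) + 3) * (c * r)))).congr
      fun i => ?_
    push_cast
    rw [pow_succ]; ring
  -- sum = x
  have hqsum : (∑' i : ℕ, c * r ^ (i + 1)) = x := by
    have h1 : (∑' i : ℕ, c * r ^ (i + 1)) = ∑' i : ℕ, (c * r) * r ^ i :=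
      tsum_congr fun i => by rw [pow_succ]; ring
    rw [h1, tsum_mul_left, tsum_geometric_of_lt_one hr0.le hr1, h1r, hcdef, hrdef]
    field_simp
  -- mean = 1 + 4x
  have hterm1 : c * r * (r / (1 - r) ^ 2) = a := by
    rw [h1r, hcdef, hrdef]
    field_simp
  have hqmean : (∑' i : ℕ, ((i + (n + 3) : ℕ) : ℝ) * (c * r ^ (i + 1))) = 1 + 4 * x := by
    have h1 : (∑' i : ℕ, ((i + (n + 3) : ℕ) : ℝ) * (c * r ^ (i + 1)))
        = ∑' i : ℕ, ((c * r) * ((i : ℝ) * r ^ i) + (((n : ℝ) + 3) * (c * r)) * r ^ i) :=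
      tsum_congr fun i => by push_cast; rw [pow_succ]; ring
    rw [h1, Summable.tsum_add (hSig.mul_left (c * r)) (hSgeo.mul_left (((n : ℝ) + 3) * (c * r))),
      tsum_mul_left, tsum_mul_left, tsum_coe_mul_geometric_of_norm_lt_one hrabs,
      tsum_geometric_of_lt_one hr0.le hr1]
    have h2 : ((n : ℝ) + 3) * (c * r) * (1 - r)⁻¹ = ((n : ℝ) + 3) * x := by
      have : c * r * (1 - r)⁻¹ = x := by
        rw [h1r, hcdef, hrdef]; field_simp
      rw [mul_assoc, mul_assoc, ← mul_assoc c, this]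
    rw [hterm1, h2, ha]
    ring
  refine ⟨hr0, hr1, fun k hk => (mul_pos hc0 (pow_pos hr0 _)).le, hqsum, hqmean, ?_, ?_⟩
  · -- entropy maximality
    intro p hp0 hSp hSkp hSplogp hpsum hpmean
    set A := Real.log c - ((n : ℝ) + 2) * Real.log r with hA
    set B := Real.log r with hB
    have hq0 : ∀ i : ℕ, 0 < c * r ^ (i + 1) := fun i => mul_pos hc0 (pow_pos hr0 _)
    have hlog : ∀ i : ℕ, Real.log (c * r ^ (i + 1)) = A + ((i + (n + 3) : ℕ) : ℝ) * B := by
      intro i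
      rw [Real.log_mul hc0.ne' (pow_pos hr0 _).ne', Real.log_pow, hA, hB]
      push_cast
      ring
    have keyval : ∀ P : ℕ → ℝ, Summable P →
        Summable (fun i : ℕ => ((i + (n + 3) : ℕ) : ℝ) * P i) →
        (∑' i : ℕ, P i) = x →
        (∑' i : ℕ, ((i + (n + 3) : ℕ) : ℝ) * P i) = 1 + 4 * x →
        (∑' i : ℕ, P i * (A + ((i + (n + 3) : ℕ) : ℝ) * B)) = A * x + B * (1 + 4 * x) := by
      intro P h1 h2 hs1 hs2
      have he : (fun i : ℕ => P i * (A + ((i + (n + 3) : ℕ) : ℝ) * B))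
          = fun i : ℕ => A * P i + B * (((i + (n + 3) : ℕ) : ℝ) * P i) := by
        funext i; ring
      rw [he, Summable.tsum_add (h1.mul_left A) (h2.mul_left B), tsum_mul_left, tsum_mul_left,
        hs1, hs2]
    have hplogq_eq : (∑' i : ℕ, p (i + (n + 3)) * Real.log (c * r ^ (i + 1)))
        = A * x + B * (1 + 4 * x) := by
      rw [tsum_congr fun i => by rw [hlog i]]
      exact keyval _ hSp hSkp hpsum hpmean
    have hqlogq_eq : (∑' i : ℕ, (c * r ^ (i + 1)) * Real.log (c * r ^ (i + 1)))
        = A * x + B * (1 + 4 * x) := by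
      rw [tsum_congr fun i => by rw [hlog i]]
      exact keyval _ hSq hSkq hqsum hqmean
    have hSplogq : Summable (fun i : ℕ => p (i + (n + 3)) * Real.log (c * r ^ (i + 1))) := by
      refine ((hSp.mul_left A).add (hSkp.mul_left B)).congr fun i => ?_
      rw [hlog i]; ring
    have gibbs : ∀ i : ℕ, p (i + (n + 3)) - c * r ^ (i + 1)
        ≤ p (i + (n + 3)) * Real.log (p (i + (n + 3)))
          - p (i + (n + 3)) * Real.log (c * r ^ (i + 1)) := by
      intro i
      have hpi : 0 ≤ p (i + (n + 3)) := hp0 _ (Nat.le_add_left _ _)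
      set pi := p (i + (n + 3))
      set qi := c * r ^ (i + 1)
      have hqi : 0 < qi := hq0 i
      rcases eq_or_lt_of_le hpi with h | h
      · rw [← h]; simp; linarith
      · have hl := Real.log_le_sub_one_of_pos (div_pos hqi h)
        rw [Real.log_div hqi.ne' h.ne'] at hl
        have h2 : pi * (Real.log qi - Real.log pi) ≤ pi * (qi / pi - 1) :=
          mul_le_mul_of_nonneg_left hl hpi
        have h3 : pi * (qi / pi - 1) = qi - pi := by field_simp
        rw [h3] at h2
        nlinarith
    have hle : (∑' i : ℕ, (p (i + (n + 3)) - c * r ^ (i + 1)))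
        ≤ ∑' i : ℕ, (p (i + (n + 3)) * Real.log (p (i + (n + 3)))
            - p (i + (n + 3)) * Real.log (c * r ^ (i + 1))) :=
      Summable.tsum_le_tsum gibbs (hSp.sub hSq) (hSplogp.sub hSplogq)
    rw [Summable.tsum_sub hSp hSq, Summable.tsum_sub hSplogp hSplogq, hpsum, hqsum, hplogq_eq] at hle
    rw [hqlogq_eq]
    linarith
  · -- golden ratio case
    intro hgx k hk
    set g := (Real.sqrt 5 - 1) / 2 with hg
    have h5 : Real.sqrt 5 ^ 2 = 5 := Real.sq_sqrt (by norm_num)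
    have hs5 : (1 : ℝ) < Real.sqrt 5 := by nlinarith [Real.sqrt_nonneg 5]
    have hgpos : 0 < g := by rw [hg]; linarith
    have hg1 : g ^ 2 = 1 - g := by rw [hg]; nlinarith
    have hng : (0 : ℝ) < (n : ℝ) + g := by linarith
    have hxg : x * ((n : ℝ) + g) = 1 := by
      rw [hgx, one_div, inv_mul_cancel₀ hng.ne']
    have hag : a = (1 + g) * x := by rw [ha]; linear_combination -hxg
    have hbg : b = (2 + g) * x := by rw [hb]; linear_combination -hxg
    have h2g : (2 : ℝ) + g ≠ 0 := by positivity
    have h1g : (1 : ℝ) + g ≠ 0 := by positivity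
    have hrg : r = g := by
      rw [hrdef, hag, hbg]
      rw [mul_div_mul_right _ _ hx0.ne']
      rw [div_eq_iff h2g]
      linear_combination -hg1
    have hcg : c = x * g := by
      rw [hcdef, hag]
      rw [div_eq_iff (by positivity : (1 + g) * x ≠ 0)]
      linear_combination x ^ 2 * hg1 - x ^ 2 / 2 * h5
    have hk2 : k - (n + 1) = (k - (n + 2)) + 1 := by omega
    rw [hrg, hcg, hk2, pow_succ]
    ring
end
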